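/- There exists a finite constant C₀, depending only on h, such that for all β ≥ C₀ and all L ≥ 2(n₀+2): every function f : V₋₁ → [0,1] with f ≡ 1 on Rᵃ and f(-1) = 0 satisfies D_V(f) ≥ C₀^{−1}·|Λ_L|·e^{−βΓ_c}, where D_V(f) = (1/2) Σ min(e^{−βℍ(σ)}, e^{−βℍ(σ')}) (f(σ') − f(σ))², the sum running over all ordered pairs (σ,σ') of configurations in V₋₁ differing at exactly one site. Equivalently, the variationally defined capacity Cap_V(Rᵃ, {-1}) of the chain reflected in V₋₁ is at least |Λ_L|·e^{−βΓ_c}/C₀. -/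

import Mathlib

open Classical Finset Filter Topology

noncomputable section

namespace BC

/-- Sites of the two-dimensional discrete torus of side `L`. -/
abbrev Site (L : ℕ) := ZMod L × ZMod L

/-- Spin configurations: a spin `s : Fin 3` at a site encodes the value `s - 1 ∈ {-1,0,1}`. -/
abbrev Cfg (L : ℕ) := Site L → Fin 3

/-- The spin value in `{-1, 0, 1}` encoded by an element of `Fin 3`. -/
def sval (s : Fin 3) : ℤ := (s : ℤ) - 1

/-- The critical length `n₀ = ⌊2/h⌋`. -/
def n0 (h : ℝ) : ℕ := ⌊(2 : ℝ) / h⌋₊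

/-- The configuration `-1` with all spins equal to `-1`. -/
def cminus (L : ℕ) : Cfg L := fun _ => 0

/-- The configuration `0` with all spins equal to `0`. -/
def czero (L : ℕ) : Cfg L := fun _ => 1

/-- The configuration `+1` with all spins equal to `+1`. -/
def cplus (L : ℕ) : Cfg L := fun _ => 2

/-- Nearest-neighbour relation on the torus. -/
def nbr (L : ℕ) (x y : Site L) : Prop :=
  y = x + (1, 0) ∨ y = x - (1, 0) ∨ y = x + (0, 1) ∨ y = x - (0, 1)

/-- The four nearest neighbours of a site, as a finite set. -/
def nbrFinset (L : ℕ) (x : Site L) : Finset (Site L) :=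
  {x + (1, 0), x - (1, 0), x + (0, 1), x - (0, 1)}

/-- The torus viewed as a simple graph with nearest-neighbour adjacency. -/
def torusGraph (L : ℕ) : SimpleGraph (Site L) where
  Adj x y := x ≠ y ∧ nbr L x y
  symm := by
    constructor
    rintro x y ⟨hne, hn⟩
    refine ⟨hne.symm, ?_⟩
    unfold nbr at hn ⊢
    rcases hn with h1 | h1 | h1 | h1 <;> subst h1 <;> simp
  loopless := ⟨by rintro x ⟨hne, -⟩; exact hne rfl⟩

/-- The `s × t` rectangle of sites with lower-left corner `a`. -/
def rect (L : ℕ) (a : Site L) (s t : ℕ) : Finset (Site L) :=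
  (Finset.range s ×ˢ Finset.range t).image
    (fun p => (a.1 + (p.1 : ZMod L), a.2 + (p.2 : ZMod L)))

/-- The four corners of the `s × t` rectangle with lower-left corner `a`. -/
def corners (L : ℕ) (a : Site L) (s t : ℕ) : Finset (Site L) :=
  {(a.1, a.2), (a.1 + ((s - 1 : ℕ) : ZMod L), a.2),
   (a.1, a.2 + ((t - 1 : ℕ) : ZMod L)),
   (a.1 + ((s - 1 : ℕ) : ZMod L), a.2 + ((t - 1 : ℕ) : ZMod L))}

/-- `S` is an `n × (n+1)` rectangle (in either orientation). -/
def isCritRect (L n : ℕ) (S : Finset (Site L)) : Prop :=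
  ∃ a : Site L, S = rect L a n (n + 1) ∨ S = rect L a (n + 1) n

/-- `S` is an `n × (n+1)` rectangle plus an extra site attached to a longest side. -/
def critRl (L n : ℕ) (S : Finset (Site L)) : Prop :=
  ∃ (a : Site L) (i : ℕ), i ≤ n ∧
    (S = insert (a.1 + (i : ZMod L), a.2 - 1) (rect L a (n + 1) n) ∨
     S = insert (a.1 + (i : ZMod L), a.2 + (n : ZMod L)) (rect L a (n + 1) n) ∨
     S = insert (a.1 - 1, a.2 + (i : ZMod L)) (rect L a n (n + 1)) ∨
     S = insert (a.1 + (n : ZMod L), a.2 + (i : ZMod L)) (rect L a n (n + 1)))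

/-- `S` is an `n × (n+1)` rectangle plus an extra site attached to a longest side,
next to a corner of the rectangle. -/
def critRlc (L n : ℕ) (S : Finset (Site L)) : Prop :=
  ∃ (a : Site L) (i : ℕ), i ≤ n ∧ (i = 0 ∨ i = n) ∧
    (S = insert (a.1 + (i : ZMod L), a.2 - 1) (rect L a (n + 1) n) ∨
     S = insert (a.1 + (i : ZMod L), a.2 + (n : ZMod L)) (rect L a (n + 1) n) ∨
     S = insert (a.1 - 1, a.2 + (i : ZMod L)) (rect L a n (n + 1)) ∨
     S = insert (a.1 + (n : ZMod L), a.2 + (i : ZMod L)) (rect L a n (n + 1)))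

/-- `S` is an `n × (n+1)` rectangle plus an extra site attached to a longest side,
away from the corners of the rectangle. -/
def critRli (L n : ℕ) (S : Finset (Site L)) : Prop :=
  ∃ (a : Site L) (i : ℕ), 0 < i ∧ i < n ∧
    (S = insert (a.1 + (i : ZMod L), a.2 - 1) (rect L a (n + 1) n) ∨
     S = insert (a.1 + (i : ZMod L), a.2 + (n : ZMod L)) (rect L a (n + 1) n) ∨
     S = insert (a.1 - 1, a.2 + (i : ZMod L)) (rect L a n (n + 1)) ∨
     S = insert (a.1 + (n : ZMod L), a.2 + (i : ZMod L)) (rect L a n (n + 1)))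

/-- `S` is an `n × (n+1)` rectangle plus an extra site attached to a shortest side. -/
def critRs (L n : ℕ) (S : Finset (Site L)) : Prop :=
  ∃ (a : Site L) (j : ℕ), j < n ∧
    (S = insert (a.1 - 1, a.2 + (j : ZMod L)) (rect L a (n + 1) n) ∨
     S = insert (a.1 + ((n + 1 : ℕ) : ZMod L), a.2 + (j : ZMod L)) (rect L a (n + 1) n) ∨
     S = insert (a.1 + (j : ZMod L), a.2 - 1) (rect L a n (n + 1)) ∨
     S = insert (a.1 + (j : ZMod L), a.2 + ((n + 1 : ℕ) : ZMod L)) (rect L a n (n + 1)))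

/-- `S` is an `n × (n+1)` rectangle plus two mutually adjacent extra sites, each attached
to a longest side. -/
def critRl2 (L n : ℕ) (S : Finset (Site L)) : Prop :=
  ∃ (a : Site L) (i : ℕ), i + 1 ≤ n ∧
    (S = rect L a (n + 1) n ∪
        {(a.1 + (i : ZMod L), a.2 - 1), (a.1 + (i : ZMod L) + 1, a.2 - 1)} ∨
     S = rect L a (n + 1) n ∪
        {(a.1 + (i : ZMod L), a.2 + (n : ZMod L)), (a.1 + (i : ZMod L) + 1, a.2 + (n : ZMod L))} ∨
     S = rect L a n (n + 1) ∪
        {(a.1 - 1, a.2 + (i : ZMod L)), (a.1 - 1, a.2 + (i : ZMod L) + 1)} ∨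
     S = rect L a n (n + 1) ∪
        {(a.1 + (n : ZMod L), a.2 + (i : ZMod L)), (a.1 + (n : ZMod L), a.2 + (i : ZMod L) + 1)})

section

variable (L : ℕ) [NeZero L]

/-- The Blume-Capel Hamiltonian with zero chemical potential and magnetic field `h`. -/
def ham (h : ℝ) (σ : Cfg L) : ℝ :=
  (∑ x : Site L,
     (((sval (σ (x + (1, 0))) : ℝ) - (sval (σ x) : ℝ)) ^ 2 +
      ((sval (σ (x + (0, 1))) : ℝ) - (sval (σ x) : ℝ)) ^ 2)) -
  h * ∑ x : Site L, (sval (σ x) : ℝ)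

/-- The set `A(σ)` of sites where the spin differs from `-1`. -/
def Asites (σ : Cfg L) : Finset (Site L) := univ.filter fun x => σ x ≠ 0

/-- `N(σ)`, the number of spins different from `-1`. -/
def Nsz (σ : Cfg L) : ℕ := (Asites L σ).card

/-- The set of sites where the spin differs from `0`. -/
def A0sites (σ : Cfg L) : Finset (Site L) := univ.filter fun x => σ x ≠ 1

/-- `σ^{x,+}` : flip the spin at `x` by `+1 mod 3`. -/
def flipUp (σ : Cfg L) (x : Site L) : Cfg L := Function.update σ x (σ x + 1)

/-- `σ^{x,-}` : flip the spin at `x` by `-1 mod 3`. -/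
def flipDown (σ : Cfg L) (x : Site L) : Cfg L := Function.update σ x (σ x - 1)

/-- Metropolis jump rate. -/
def rate (h β : ℝ) (σ τ : Cfg L) : ℝ := Real.exp (-β * max (ham L h τ - ham L h σ) 0)

/-- Holding rate `λ_β`. -/
def lam (h β : ℝ) (σ : Cfg L) : ℝ :=
  ∑ x : Site L, (rate L h β σ (flipUp L σ x) + rate L h β σ (flipDown L σ x))

/-- One-step average of `u` under the jump probabilities `p_β = R_β/λ_β`. -/
def avg (h β : ℝ) (u : Cfg L → ℝ) (σ : Cfg L) : ℝ :=
  (∑ x : Site L,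
     (rate L h β σ (flipUp L σ x) * u (flipUp L σ x) +
      rate L h β σ (flipDown L σ x) * u (flipDown L σ x))) / lam L h β σ

/-- `u` is harmonic (w.r.t. the jump probabilities `p_β`) on `D`. -/
def harmOn (h β : ℝ) (u : Cfg L → ℝ) (D : Set (Cfg L)) : Prop :=
  ∀ η ∈ D, u η = avg L h β u η

/-- Unnormalised Gibbs weight `e^{-β ℍ(σ)}`. -/
def gw (h β : ℝ) (σ : Cfg L) : ℝ := Real.exp (-β * ham L h σ)

/-- Two configurations differ at exactly one site. -/
def oneDiff (σ τ : Cfg L) : Prop := (univ.filter fun x => σ x ≠ τ x).card = 1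

/-- Dirichlet form of the chain reflected in `V`. -/
def dirV (h β : ℝ) (V : Set (Cfg L)) (f : Cfg L → ℝ) : ℝ :=
  (1 / 2) * ∑ σ : Cfg L, ∑ τ : Cfg L,
    if σ ∈ V ∧ τ ∈ V ∧ oneDiff L σ τ
    then min (gw L h β σ) (gw L h β τ) * (f τ - f σ) ^ 2 else 0

/-- Capacity (via the Dirichlet principle) for the chain reflected in `V`. -/
def capV (h β : ℝ) (V A B : Set (Cfg L)) : ℝ :=
  sInf { e : ℝ | ∃ f : Cfg L → ℝ, (∀ σ, 0 ≤ f σ ∧ f σ ≤ 1) ∧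
        (∀ σ ∈ A, f σ = 1) ∧ (∀ σ ∈ B, f σ = 0) ∧ e = dirV L h β V f }

/-- Dirichlet form of the full chain. -/
def dirForm (h β : ℝ) (f : Cfg L → ℝ) : ℝ :=
  (1 / 2) * ∑ σ : Cfg L, ∑ x : Site L,
    (min (gw L h β σ) (gw L h β (flipUp L σ x)) * (f (flipUp L σ x) - f σ) ^ 2 +
     min (gw L h β σ) (gw L h β (flipDown L σ x)) * (f (flipDown L σ x) - f σ) ^ 2)

/-- Capacity via the Dirichlet variational principle. -/
def capa (h β : ℝ) (A B : Set (Cfg L)) : ℝ :=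
  sInf { e : ℝ | ∃ f : Cfg L → ℝ, (∀ σ, 0 ≤ f σ ∧ f σ ≤ 1) ∧
        (∀ σ ∈ A, f σ = 1) ∧ (∀ σ ∈ B, f σ = 0) ∧ e = dirForm L h β f }

/-- Holding rate of the chain reflected in `V`. -/
def lamV (h β : ℝ) (V : Set (Cfg L)) (σ : Cfg L) : ℝ :=
  ∑ x : Site L,
    ((if flipUp L σ x ∈ V then rate L h β σ (flipUp L σ x) else 0) +
     (if flipDown L σ x ∈ V then rate L h β σ (flipDown L σ x) else 0))

/-- One-step average for the chain reflected in `V`. -/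
def avgV (h β : ℝ) (V : Set (Cfg L)) (u : Cfg L → ℝ) (σ : Cfg L) : ℝ :=
  (∑ x : Site L,
    ((if flipUp L σ x ∈ V then rate L h β σ (flipUp L σ x) * u (flipUp L σ x) else 0) +
     (if flipDown L σ x ∈ V then rate L h β σ (flipDown L σ x) * u (flipDown L σ x) else 0))) /
  lamV L h β V σ

/-- `R` : `0`-spins forming an `n × (n+1)` rectangle in a sea of `-1`-spins. -/
def setR (n : ℕ) : Set (Cfg L) :=
  {σ | (∀ x, σ x ≠ 2) ∧ isCritRect L n (Asites L σ)}

/-- `B` : configurations with exactly `n(n+1)` spins different from `-1`. -/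
def setB (n : ℕ) : Set (Cfg L) := {σ | Nsz L σ = n * (n + 1)}

/-- `R⁺` : an `n × (n+1)` rectangle of `0`-spins plus one extra spin (`0` or `+1`)
outside the rectangle, in a sea of `-1`-spins. -/
def setRplus (n : ℕ) : Set (Cfg L) :=
  {σ | ∃ (S : Finset (Site L)) (z : Site L), isCritRect L n S ∧ z ∉ S ∧
       Asites L σ = insert z S ∧ ∀ x ∈ S, σ x = 1}

/-- `Rᵃ` : an `n × (n+1)` rectangle of `0`-spins plus one extra `0`-spin attached to the
rectangle, in a sea of `-1`-spins. -/
def setRa (n : ℕ) : Set (Cfg L) :=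
  {σ | ∃ (S : Finset (Site L)) (z : Site L), isCritRect L n S ∧ z ∉ S ∧
       Asites L σ = insert z S ∧ (∀ x ∈ S, σ x = 1) ∧ σ z = 1 ∧ ∃ y ∈ S, nbr L z y}

/-- The valley `V₋₁` of the configuration `-1`. -/
def valleyM (n : ℕ) : Set (Cfg L) := {σ | Nsz L σ ≤ n * (n + 1)} ∪ setRplus L n

/-- `B⁺`, the boundary of the valley of `-1`. -/
def setBplus (n : ℕ) : Set (Cfg L) := (setB L n \ setR L n) ∪ setRplus L n

/-- `Rˡ` : critical droplet with the protuberance attached to a longest side. -/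
def setRl (n : ℕ) : Set (Cfg L) :=
  {σ | (∀ x, σ x ≠ 2) ∧ critRl L n (Asites L σ) ∧ Nsz L σ = n * (n + 1) + 1}

/-- `Rˡᶜ` : protuberance attached to a longest side next to a corner. -/
def setRlc (n : ℕ) : Set (Cfg L) :=
  {σ | (∀ x, σ x ≠ 2) ∧ critRlc L n (Asites L σ) ∧ Nsz L σ = n * (n + 1) + 1}

/-- `Rˡⁱ` : protuberance attached to a longest side away from the corners. -/
def setRli (n : ℕ) : Set (Cfg L) :=
  {σ | (∀ x, σ x ≠ 2) ∧ critRli L n (Asites L σ) ∧ Nsz L σ = n * (n + 1) + 1}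

/-- `Rˢ` : protuberance attached to a shortest side. -/
def setRs (n : ℕ) : Set (Cfg L) :=
  {σ | (∀ x, σ x ≠ 2) ∧ critRs L n (Asites L σ) ∧ Nsz L σ = n * (n + 1) + 1}

/-- `Rˡ₀` : critical droplet of `+1`-spins in a sea of `0`-spins, protuberance on a
longest side. -/
def setRl0 (n : ℕ) : Set (Cfg L) :=
  {σ | (∀ x, σ x ≠ 0) ∧ critRl L n (A0sites L σ) ∧ (A0sites L σ).card = n * (n + 1) + 1}

/-- The energy `Γ_c` of a critical droplet. -/
def GammaC (h : ℝ) : ℝ :=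
  4 * ((n0 h : ℝ) + 1) - h * (((n0 h * (n0 h + 1) + 1 : ℕ) : ℝ) - (L : ℝ) ^ 2)

/-- `δ₁(β) = e^{-hβ} + |Λ|^{1/2} e^{-(2-h)β} + |Λ| e^{-(4-h)β}`. -/
def delta1 (h β : ℝ) : ℝ :=
  Real.exp (-h * β) + (L : ℝ) * Real.exp (-(2 - h) * β) +
    (L : ℝ) ^ 2 * Real.exp (-(4 - h) * β)

/-- `δ₅(β) = e^{-[(n₀+1)h-2]β} + e^{-hβ} + |Λ|^{3/2} e^{-(2-h)β}`. -/
def delta5 (h β : ℝ) : ℝ :=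
  Real.exp (-(((n0 h : ℝ) + 1) * h - 2) * β) + Real.exp (-h * β) +
    (L : ℝ) ^ 3 * Real.exp (-(2 - h) * β)

/-- `δ(β) = |Λ|^{1/2} e^{-[(n₀+1)h-2]β} + |Λ|^{1/2} e^{-hβ} + |Λ|² e^{-(2-h)β}`. -/
def deltaP (h β : ℝ) : ℝ :=
  (L : ℝ) * Real.exp (-(((n0 h : ℝ) + 1) * h - 2) * β) + (L : ℝ) * Real.exp (-h * β) +
    (L : ℝ) ^ 4 * Real.exp (-(2 - h) * β)

end

end BC
namespace Aux

open BC

variable {L : ℕ} [NeZero L]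

lemma helper (u : Fin 3) (hu : u ≠ 2) :
    ((sval u : ℝ)) ^ 2 - ((sval u : ℝ) + 1) ^ 2 = 1 - 2 * (if u = 1 then (1:ℝ) else 0) := by
  fin_cases u <;> simp [sval] at hu ⊢ <;> norm_num

lemma flip_ham (hL : 3 ≤ L) (h : ℝ) (σ : BC.Cfg L) (x : BC.Site L)
    (hx : σ x = 0) (h2 : ∀ y, σ y ≠ 2) :
    BC.ham L h (Function.update σ x 1)
      = BC.ham L h σ + 4 - h
        - 2 * (((if σ (x + (1,0)) = 1 then (1:ℝ) else 0))
             + (if σ (x - (1,0)) = 1 then (1:ℝ) else 0)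
             + (if σ (x + (0,1)) = 1 then (1:ℝ) else 0)
             + (if σ (x - (0,1)) = 1 then (1:ℝ) else 0)) := by
  have hL2 : 1 < L := by omega
  haveI : Fact (1 < L) := ⟨hL2⟩
  set τ := Function.update σ x 1 with hτ
  have he1 : ((1:ZMod L), (0:ZMod L)) ≠ 0 := by
    simp [Prod.ext_iff]
  have he2 : ((0:ZMod L), (1:ZMod L)) ≠ 0 := by
    simp [Prod.ext_iff]
  have he12 : ((1:ZMod L), (0:ZMod L)) ≠ ((0:ZMod L), (1:ZMod L)) := by
    simp [Prod.ext_iff]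
  -- magnetization part
  have hmag : ∑ y : Site L, (sval (τ y) : ℝ) = (∑ y : Site L, (sval (σ y) : ℝ)) + 1 := by
    have : ∀ y : Site L, (sval (τ y) : ℝ) = (sval (σ y) : ℝ) + (if y = x then 1 else 0) := by
      intro y
      by_cases hy : y = x
      · subst hy; simp [hτ, Function.update_self, sval, hx]
      · simp [hτ, Function.update_of_ne hy, hy]
    rw [Finset.sum_congr rfl (fun y _ => this y), Finset.sum_add_distrib]
    simp
  -- interaction part
  set g : Cfg L → Site L → ℝ := fun ρ y =>
    ((sval (ρ (y + (1, 0))) : ℝ) - (sval (ρ y) : ℝ)) ^ 2 +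
      ((sval (ρ (y + (0, 1))) : ℝ) - (sval (ρ y) : ℝ)) ^ 2 with hg
  have hxe1 : x + (1,0) ≠ x := fun hc => he1 (by simpa using add_eq_left.mp hc)
  have hxe2 : x + (0,1) ≠ x := fun hc => he2 (by simpa using add_eq_left.mp hc)
  have hT1 : x ≠ x - (1,0) := fun hc => he1 (sub_eq_self.mp hc.symm)
  have hT2 : x ≠ x - (0,1) := fun hc => he2 (sub_eq_self.mp hc.symm)
  have hT3 : x - (1,0) ≠ x - (0,1) := fun hc => he12 (sub_right_injective hc)
  have hyne1 : x - (1,0) + (0,1) ≠ x := by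
    intro hc
    apply he12
    have h3 : x + ((0,1) - (1,0)) = x := by nth_rewrite 2 [← hc]; abel
    have h4 := add_eq_left.mp h3
    rw [sub_eq_zero] at h4
    exact h4.symm
  have hyne2 : x - (0,1) + (1,0) ≠ x := by
    intro hc
    apply he12
    have h3 : x + ((1,0) - (0,1)) = x := by nth_rewrite 2 [← hc]; abel
    have h4 := add_eq_left.mp h3
    rw [sub_eq_zero] at h4
    exact h4
  have s1 : (sval 1 : ℝ) = 0 := by norm_num [sval]
  have s0 : (sval 0 : ℝ) = -1 := by norm_num [sval]
  have tx : g τ x - g σ x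
      = (1 - 2 * (if σ (x + (1,0)) = 1 then (1:ℝ) else 0))
        + (1 - 2 * (if σ (x + (0,1)) = 1 then (1:ℝ) else 0)) := by
    have u1 : τ x = 1 := Function.update_self x 1 σ
    have u2 : τ (x + (1,0)) = σ (x + (1,0)) := Function.update_of_ne hxe1 1 σ
    have u3 : τ (x + (0,1)) = σ (x + (0,1)) := Function.update_of_ne hxe2 1 σ
    simp only [hg, u1, u2, u3, hx, s1, s0]
    have e1 := helper (σ (x + (1,0))) (h2 _)
    have e3 := helper (σ (x + (0,1))) (h2 _)
    linear_combination e1 + e3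
  have ta : g τ (x - (1,0)) - g σ (x - (1,0))
      = 1 - 2 * (if σ (x - (1,0)) = 1 then (1:ℝ) else 0) := by
    have u1 : τ (x - (1,0)) = σ (x - (1,0)) := Function.update_of_ne (Ne.symm hT1) 1 σ
    have u2 : x - (1,0) + (1,0) = x := sub_add_cancel x (1,0)
    have u3 : τ (x - (1,0) + (0,1)) = σ (x - (1,0) + (0,1)) := Function.update_of_ne hyne1 1 σ
    have u4 : τ x = 1 := Function.update_self x 1 σ
    simp only [hg, u1, u2, u3, u4, hx, s1, s0]
    have e1 := helper (σ (x - (1,0))) (h2 _)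
    linear_combination e1
  have tb : g τ (x - (0,1)) - g σ (x - (0,1))
      = 1 - 2 * (if σ (x - (0,1)) = 1 then (1:ℝ) else 0) := by
    have u1 : τ (x - (0,1)) = σ (x - (0,1)) := Function.update_of_ne (Ne.symm hT2) 1 σ
    have u2 : x - (0,1) + (0,1) = x := sub_add_cancel x (0,1)
    have u3 : τ (x - (0,1) + (1,0)) = σ (x - (0,1) + (1,0)) := Function.update_of_ne hyne2 1 σ
    have u4 : τ x = 1 := Function.update_self x 1 σ
    simp only [hg, u1, u2, u3, u4, hx, s1, s0]
    have e1 := helper (σ (x - (0,1))) (h2 _)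
    linear_combination e1
  have hz : ∀ y ∈ (Finset.univ : Finset (Site L)),
      y ∉ ({x, x - (1,0), x - (0,1)} : Finset (Site L)) → g τ y - g σ y = 0 := by
    intro y _ hy
    simp only [Finset.mem_insert, Finset.mem_singleton, not_or] at hy
    obtain ⟨hy1, hy2, hy3⟩ := hy
    have u1 : τ y = σ y := Function.update_of_ne hy1 1 σ
    have u2 : τ (y + (1,0)) = σ (y + (1,0)) := by
      refine Function.update_of_ne ?_ 1 σ
      intro hc; exact hy2 (by rw [← hc]; abel)
    have u3 : τ (y + (0,1)) = σ (y + (0,1)) := by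
      refine Function.update_of_ne ?_ 1 σ
      intro hc; exact hy3 (by rw [← hc]; abel)
    simp only [hg, u1, u2, u3, sub_self]
  have hmem1 : x ∉ ({x - (1,0), x - (0,1)} : Finset (Site L)) := by
    simp only [Finset.mem_insert, Finset.mem_singleton]
    push_neg
    exact ⟨hT1, hT2⟩
  have hmem2 : x - (1,0) ∉ ({x - (0,1)} : Finset (Site L)) := by
    simpa using hT3
  have hsum : ∑ y : Site L, (g τ y - g σ y)
      = (g τ x - g σ x) + ((g τ (x - (1,0)) - g σ (x - (1,0)))
          + (g τ (x - (0,1)) - g σ (x - (0,1)))) := by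
    rw [← Finset.sum_subset (Finset.subset_univ ({x, x - (1,0), x - (0,1)} : Finset (Site L))) hz]
    rw [Finset.sum_insert hmem1, Finset.sum_insert hmem2, Finset.sum_singleton]
  have hint : ∑ y : Site L, g τ y = ∑ y : Site L, g σ y
      + ((1 - 2 * (if σ (x + (1,0)) = 1 then (1:ℝ) else 0))
        + (1 - 2 * (if σ (x + (0,1)) = 1 then (1:ℝ) else 0))
        + (1 - 2 * (if σ (x - (1,0)) = 1 then (1:ℝ) else 0))
        + (1 - 2 * (if σ (x - (0,1)) = 1 then (1:ℝ) else 0))) := by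
    rw [Finset.sum_sub_distrib, tx, ta, tb] at hsum
    linarith
  have hham : ∀ ρ : Cfg L, BC.ham L h ρ
      = ∑ y : Site L, g ρ y - h * ∑ y : Site L, (sval (ρ y) : ℝ) := fun ρ => rfl
  rw [hham, hham, hint, hmag]
  ring

def emb (L : ℕ) [NeZero L] (a : Site L) (p : ℕ × ℕ) : Site L :=
  (a.1 + (p.1 : ZMod L), a.2 + (p.2 : ZMod L))

def pt (n k : ℕ) : ℕ × ℕ := if k < n * (n + 1) then (k / n, k % n) else (0, n)

def shp (n i : ℕ) : Finset (ℕ × ℕ) := (Finset.range i).image (pt n)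

def cfg (L : ℕ) [NeZero L] (a : Site L) (n i : ℕ) : Cfg L :=
  fun x => if x ∈ (shp n i).image (emb L a) then 1 else 0

lemma pt_bound {n k : ℕ} (hn : 1 ≤ n) (hk : k ≤ n * (n + 1)) :
    (pt n k).1 ≤ n ∧ (pt n k).2 ≤ n := by
  unfold pt
  split_ifs with hlt
  · constructor
    · have : k / n < n + 1 := (Nat.div_lt_iff_lt_mul hn).mpr (by
        calc k < n * (n+1) := hlt
        _ = (n+1) * n := by ring)
      omega
    · have := Nat.mod_lt k hn
      omega
  · exact ⟨Nat.zero_le n, le_refl n⟩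

lemma pt_inj {n k l : ℕ} (hn : 1 ≤ n) (hk : k ≤ n * (n + 1)) (hl : l ≤ n * (n + 1))
    (he : pt n k = pt n l) : k = l := by
  unfold pt at he
  split_ifs at he with h1 h2 h2
  · have e1 : k / n = l / n := congrArg Prod.fst he
    have e2 : k % n = l % n := congrArg Prod.snd he
    calc k = n * (k / n) + k % n := (Nat.div_add_mod k n).symm
    _ = n * (l / n) + l % n := by rw [e1, e2]
    _ = l := Nat.div_add_mod l n
  · have e2 : k % n = n := congrArg Prod.snd he
    have := Nat.mod_lt k hn
    omega
  · have e2 : n = l % n := congrArg Prod.snd he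
    have := Nat.mod_lt l hn
    omega
  · omega

lemma emb_inj {L n : ℕ} [NeZero L] (hL : 2 * (n + 2) ≤ L) (a : Site L) {p q : ℕ × ℕ}
    (hp1 : p.1 ≤ n) (hp2 : p.2 ≤ n) (hq1 : q.1 ≤ n) (hq2 : q.2 ≤ n)
    (he : emb L a p = emb L a q) : p = q := by
  unfold emb at he
  have e1 : (p.1 : ZMod L) = (q.1 : ZMod L) := by
    have := congrArg Prod.fst he
    simpa using this
  have e2 : (p.2 : ZMod L) = (q.2 : ZMod L) := by
    have := congrArg Prod.snd he
    simpa using this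
  have v1 : p.1 = q.1 := by
    have := congrArg ZMod.val e1
    rwa [ZMod.val_cast_of_lt (by omega), ZMod.val_cast_of_lt (by omega)] at this
  have v2 : p.2 = q.2 := by
    have := congrArg ZMod.val e2
    rwa [ZMod.val_cast_of_lt (by omega), ZMod.val_cast_of_lt (by omega)] at this
  exact Prod.ext v1 v2

lemma mem_shp_bound {n i : ℕ} (hn : 1 ≤ n) (hi : i ≤ n * (n + 1) + 1) {p : ℕ × ℕ}
    (hp : p ∈ shp n i) : p.1 ≤ n ∧ p.2 ≤ n := by
  simp only [shp, Finset.mem_image, Finset.mem_range] at hp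
  obtain ⟨k, hk, rfl⟩ := hp
  exact pt_bound hn (by omega)

lemma pt_not_mem {n i : ℕ} (hn : 1 ≤ n) (hi : i ≤ n * (n + 1)) : pt n i ∉ shp n i := by
  simp only [shp, Finset.mem_image, Finset.mem_range]
  rintro ⟨k, hk, he⟩
  have := pt_inj hn (by omega) hi he
  omega

lemma cfg_new_zero {L n : ℕ} [NeZero L] (hL : 2 * (n + 2) ≤ L) (a : Site L) {i : ℕ}
    (hn : 1 ≤ n) (hi : i ≤ n * (n + 1)) :
    cfg L a n i (emb L a (pt n i)) = 0 := by
  unfold cfg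
  rw [if_neg]
  simp only [Finset.mem_image]
  rintro ⟨p, hp, he⟩
  have hb := mem_shp_bound hn (by omega) hp
  have hb2 := pt_bound hn hi
  have := emb_inj hL a hb.1 hb.2 hb2.1 hb2.2 he
  rw [this] at hp
  exact pt_not_mem hn hi hp

lemma cfg_mem_one {L n : ℕ} [NeZero L] (a : Site L) {i : ℕ} {p : ℕ × ℕ}
    (hp : p ∈ shp n i) : cfg L a n i (emb L a p) = 1 := by
  unfold cfg
  rw [if_pos]
  exact Finset.mem_image_of_mem _ hp

lemma cfg_no2 {L n : ℕ} [NeZero L] (a : Site L) (i : ℕ) (x : Site L) :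
    cfg L a n i x ≠ 2 := by
  unfold cfg
  split_ifs <;> decide

lemma cfg_succ {L n : ℕ} [NeZero L] (a : Site L) (i : ℕ) :
    cfg L a n (i + 1) = Function.update (cfg L a n i) (emb L a (pt n i)) 1 := by
  funext x
  by_cases hx : x = emb L a (pt n i)
  · subst hx
    rw [Function.update_self]
    unfold cfg
    rw [if_pos]
    refine Finset.mem_image_of_mem _ ?_
    simp only [shp, Finset.mem_image, Finset.mem_range]
    exact ⟨i, by omega, rfl⟩
  · rw [Function.update_of_ne hx]
    unfold cfg
    have : (x ∈ (shp n (i+1)).image (emb L a)) ↔ (x ∈ (shp n i).image (emb L a)) := by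
      constructor
      · simp only [Finset.mem_image, shp, Finset.mem_range]
        rintro ⟨p, ⟨k, hk, rfl⟩, rfl⟩
        rcases Nat.lt_succ_iff_lt_or_eq.mp hk with hk' | hk'
        · exact ⟨pt n k, ⟨k, hk', rfl⟩, rfl⟩
        · subst hk'; exact absurd rfl hx
      · simp only [Finset.mem_image, shp, Finset.mem_range]
        rintro ⟨p, ⟨k, hk, rfl⟩, rfl⟩
        exact ⟨pt n k, ⟨k, by omega, rfl⟩, rfl⟩
    simp only [this]


-- step lemmas
section Steps

variable {L n : ℕ} [NeZero L]

lemma ham_step (hL : 2 * (n + 2) ≤ L) (a : Site L) (h : ℝ) {i : ℕ}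
    (hn : 1 ≤ n) (hi : i ≤ n * (n + 1)) :
    BC.ham L h (cfg L a n (i + 1)) = BC.ham L h (cfg L a n i) + 4 - h
      - 2 * (((if cfg L a n i (emb L a (pt n i) + (1,0)) = 1 then (1:ℝ) else 0))
           + (if cfg L a n i (emb L a (pt n i) - (1,0)) = 1 then (1:ℝ) else 0)
           + (if cfg L a n i (emb L a (pt n i) + (0,1)) = 1 then (1:ℝ) else 0)
           + (if cfg L a n i (emb L a (pt n i) - (0,1)) = 1 then (1:ℝ) else 0)) := by
  rw [cfg_succ]
  exact flip_ham (by omega) h _ _ (cfg_new_zero hL a hn hi) (cfg_no2 a i)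

lemma ite_nonneg' (P : Prop) [Decidable P] : (0:ℝ) ≤ if P then (1:ℝ) else 0 := by
  split_ifs <;> norm_num

lemma step0 (hL : 2 * (n + 2) ≤ L) (a : Site L) (h : ℝ) {i : ℕ}
    (hn : 1 ≤ n) (hi : i ≤ n * (n + 1)) :
    BC.ham L h (cfg L a n (i + 1)) ≤ BC.ham L h (cfg L a n i) + 4 - h := by
  rw [ham_step hL a h hn hi]
  have := ite_nonneg' (cfg L a n i (emb L a (pt n i) + (1,0)) = 1)
  have := ite_nonneg' (cfg L a n i (emb L a (pt n i) - (1,0)) = 1)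
  have := ite_nonneg' (cfg L a n i (emb L a (pt n i) + (0,1)) = 1)
  have := ite_nonneg' (cfg L a n i (emb L a (pt n i) - (0,1)) = 1)
  linarith

lemma stepB (hL : 2 * (n + 2) ≤ L) (a : Site L) (h : ℝ) {i : ℕ}
    (hn : 1 ≤ n) (hi : i ≤ n * (n + 1))
    (hb : cfg L a n i (emb L a (pt n i) - ((0:ZMod L),(1:ZMod L))) = 1) :
    BC.ham L h (cfg L a n (i + 1)) ≤ BC.ham L h (cfg L a n i) + 2 - h := by
  rw [ham_step hL a h hn hi, if_pos hb]
  have := ite_nonneg' (cfg L a n i (emb L a (pt n i) + (1,0)) = 1)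
  have := ite_nonneg' (cfg L a n i (emb L a (pt n i) - (1,0)) = 1)
  have := ite_nonneg' (cfg L a n i (emb L a (pt n i) + (0,1)) = 1)
  linarith

lemma stepL (hL : 2 * (n + 2) ≤ L) (a : Site L) (h : ℝ) {i : ℕ}
    (hn : 1 ≤ n) (hi : i ≤ n * (n + 1))
    (hl : cfg L a n i (emb L a (pt n i) - ((1:ZMod L),(0:ZMod L))) = 1) :
    BC.ham L h (cfg L a n (i + 1)) ≤ BC.ham L h (cfg L a n i) + 2 - h := by
  rw [ham_step hL a h hn hi, if_pos hl]
  have := ite_nonneg' (cfg L a n i (emb L a (pt n i) + (1,0)) = 1)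
  have := ite_nonneg' (cfg L a n i (emb L a (pt n i) + (0,1)) = 1)
  have := ite_nonneg' (cfg L a n i (emb L a (pt n i) - (0,1)) = 1)
  linarith

lemma stepBL (hL : 2 * (n + 2) ≤ L) (a : Site L) (h : ℝ) {i : ℕ}
    (hn : 1 ≤ n) (hi : i ≤ n * (n + 1))
    (hb : cfg L a n i (emb L a (pt n i) - ((0:ZMod L),(1:ZMod L))) = 1)
    (hl : cfg L a n i (emb L a (pt n i) - ((1:ZMod L),(0:ZMod L))) = 1) :
    BC.ham L h (cfg L a n (i + 1)) ≤ BC.ham L h (cfg L a n i) - h := by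
  rw [ham_step hL a h hn hi, if_pos hb, if_pos hl]
  have := ite_nonneg' (cfg L a n i (emb L a (pt n i) + (1,0)) = 1)
  have := ite_nonneg' (cfg L a n i (emb L a (pt n i) + (0,1)) = 1)
  linarith

lemma emb_sub01 (a : Site L) (c j : ℕ) (hj : 1 ≤ j) :
    emb L a (c, j) - ((0:ZMod L),(1:ZMod L)) = emb L a (c, j - 1) := by
  unfold emb
  have : ((j - 1 : ℕ) : ZMod L) = (j : ZMod L) - 1 := by
    push_cast [Nat.cast_sub hj]
    ring
  simp only [Prod.mk_sub_mk, this, Prod.mk.injEq]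
  constructor <;> ring

lemma emb_sub10 (a : Site L) (c j : ℕ) (hc : 1 ≤ c) :
    emb L a (c, j) - ((1:ZMod L),(0:ZMod L)) = emb L a (c - 1, j) := by
  unfold emb
  have : ((c - 1 : ℕ) : ZMod L) = (c : ZMod L) - 1 := by
    push_cast [Nat.cast_sub hc]
    ring
  simp only [Prod.mk_sub_mk, this, Prod.mk.injEq]
  constructor <;> ring

lemma pt_eval (hn : 1 ≤ n) {c j : ℕ} (hc : c ≤ n) (hj : j < n) :
    pt n (c * n + j) = (c, j) := by
  have hlt : c * n + j < n * (n + 1) := by nlinarith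
  unfold pt
  rw [if_pos hlt]
  have h1 : (c * n + j) / n = c := by
    rw [add_comm, Nat.add_mul_div_right _ _ (by omega : 0 < n), Nat.div_eq_of_lt hj]
    omega
  have h2 : (c * n + j) % n = j := by
    rw [add_comm, Nat.add_mul_mod_self_right, Nat.mod_eq_of_lt hj]
  rw [h1, h2]

lemma pt_mem_shp (hn : 1 ≤ n) {k i : ℕ} (hk : k < i) : pt n k ∈ shp n i := by
  simp only [shp, Finset.mem_image, Finset.mem_range]
  exact ⟨k, hk, rfl⟩

lemma below_present (hL : 2 * (n + 2) ≤ L) (a : Site L) (hn : 1 ≤ n)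
    {c j : ℕ} (hc : c ≤ n) (hj1 : 1 ≤ j) (hj : j < n) :
    cfg L a n (c * n + j) (emb L a (pt n (c * n + j)) - ((0:ZMod L),(1:ZMod L))) = 1 := by
  rw [pt_eval hn hc hj, emb_sub01 a c j hj1]
  have : (c, j - 1) = pt n (c * n + (j - 1)) := (pt_eval hn hc (by omega)).symm
  rw [this]
  exact cfg_mem_one a (pt_mem_shp hn (by omega))

lemma left_present (hL : 2 * (n + 2) ≤ L) (a : Site L) (hn : 1 ≤ n)
    {c j : ℕ} (hc1 : 1 ≤ c) (hc : c ≤ n) (hj : j < n) :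
    cfg L a n (c * n + j) (emb L a (pt n (c * n + j)) - ((1:ZMod L),(0:ZMod L))) = 1 := by
  rw [pt_eval hn hc hj, emb_sub10 a c j hc1]
  have : (c - 1, j) = pt n ((c - 1) * n + j) := (pt_eval hn (by omega) hj).symm
  rw [this]
  refine cfg_mem_one a (pt_mem_shp hn ?_)
  have : (c - 1) * n + n ≤ c * n := by
    have : (c - 1) * n + n = ((c - 1) + 1) * n := by ring
    rw [this]
    exact Nat.mul_le_mul_right n (by omega)
  omega

lemma prot_present (hL : 2 * (n + 2) ≤ L) (a : Site L) (hn : 1 ≤ n) :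
    cfg L a n (n * (n + 1)) (emb L a (pt n (n * (n + 1))) - ((0:ZMod L),(1:ZMod L))) = 1 := by
  have hpt : pt n (n * (n + 1)) = (0, n) := by unfold pt; rw [if_neg (by omega)]
  rw [hpt, emb_sub01 a 0 n hn]
  have : ((0:ℕ), n - 1) = pt n (0 * n + (n - 1)) := (pt_eval hn (by omega) (by omega)).symm
  rw [this]
  refine cfg_mem_one a (pt_mem_shp hn ?_)
  have : n ≤ n * (n + 1) := Nat.le_mul_of_pos_right n (by omega)
  omega

end Steps

section Energy

variable {L n : ℕ} [NeZero L]

lemma cfg_zero' (a : Site L) : cfg L a n 0 = BC.cminus L := by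
  funext x
  unfold cfg shp BC.cminus
  simp

lemma ham_cminus (h : ℝ) : BC.ham L h (BC.cminus L) = h * (L : ℝ) ^ 2 := by
  unfold BC.ham BC.cminus
  have s0 : (BC.sval 0 : ℝ) = -1 := by norm_num [BC.sval]
  simp only [s0, sub_self, ne_eq, OfNat.ofNat_ne_zero, not_false_eq_true, zero_pow, add_zero,
    Finset.sum_const, Finset.card_univ, nsmul_eq_mul, Finset.sum_eq_zero_iff]
  rw [Fintype.card_prod, ZMod.card]
  push_cast
  ring

lemma bound_col0 (hL : 2 * (n + 2) ≤ L) (a : Site L) (h : ℝ) (hn : 1 ≤ n) :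
    ∀ j : ℕ, 1 ≤ j → j ≤ n →
      BC.ham L h (cfg L a n j) ≤ h * (L : ℝ) ^ 2 + 2 + (2 - h) * (j : ℝ) := by
  intro j
  induction j with
  | zero => intro h1 _; omega
  | succ j ih =>
    intro _ hj
    have hmul : n ≤ n * (n + 1) := Nat.le_mul_of_pos_right n (by omega)
    by_cases hj0 : j = 0
    · subst hj0
      have hstep := step0 hL a h hn (by omega : 0 ≤ n * (n + 1))
      rw [cfg_zero' a, ham_cminus] at hstep
      push_cast
      linarith
    · have ihj := ih (by omega) (by omega)
      have hb : cfg L a n (0 * n + j) (emb L a (pt n (0 * n + j)) - ((0:ZMod L),(1:ZMod L))) = 1 :=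
        below_present hL a hn (by omega) (by omega) (by omega)
      rw [zero_mul, zero_add] at hb
      have hstep := stepB hL a h hn (by omega : j ≤ n * (n + 1)) hb
      push_cast
      linarith

lemma bound_inner (hL : 2 * (n + 2) ≤ L) (a : Site L) (h : ℝ) (hn : 1 ≤ n)
    {c : ℕ} (hc1 : 1 ≤ c) (hc : c ≤ n) :
    ∀ j : ℕ, 1 ≤ j → j ≤ n →
      BC.ham L h (cfg L a n (c * n + j))
        ≤ BC.ham L h (cfg L a n (c * n)) + (2 - h) - h * ((j : ℝ) - 1) := by
  intro j
  induction j with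
  | zero => intro h1 _; omega
  | succ j ih =>
    intro _ hj
    have hcn : c * n ≤ n * n := Nat.mul_le_mul_right n hc
    have hnn : n * n + n = n * (n + 1) := by ring
    by_cases hj0 : j = 0
    · subst hj0
      have hl : cfg L a n (c * n + 0) (emb L a (pt n (c * n + 0)) - ((1:ZMod L),(0:ZMod L))) = 1 :=
        left_present hL a hn hc1 hc (by omega)
      rw [add_zero] at hl
      have hstep := stepL hL a h hn (by omega : c * n ≤ n * (n + 1)) hl
      rw [show c * n + (0 + 1) = c * n + 1 by ring]
      push_cast
      linarith
    · have ihj := ih (by omega) (by omega)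
      have hb := below_present hL a hn hc (by omega : 1 ≤ j) (by omega : j < n)
      have hl := left_present hL a hn hc1 hc (by omega : j < n)
      have hstep := stepBL hL a h hn (by omega : c * n + j ≤ n * (n + 1)) hb hl
      rw [show c * n + (j + 1) = (c * n + j) + 1 by ring]
      push_cast
      linarith

lemma bound_full (hL : 2 * (n + 2) ≤ L) (a : Site L) (h : ℝ) (hn : 1 ≤ n) :
    ∀ c : ℕ, 1 ≤ c → c ≤ n + 1 →
      BC.ham L h (cfg L a n (c * n))
        ≤ h * (L : ℝ) ^ 2 + 2 * ((n : ℝ) + (c : ℝ)) - h * (c : ℝ) * (n : ℝ) := by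
  intro c
  induction c with
  | zero => intro h1 _; omega
  | succ c ih =>
    intro _ hc
    by_cases hc0 : c = 0
    · subst hc0
      have := bound_col0 hL a h hn n hn (le_refl n)
      rw [show (0 + 1) * n = n by ring]
      push_cast
      linarith
    · have ihc := ih (by omega) (by omega)
      have hinner := bound_inner hL a h hn (by omega : 1 ≤ c) (by omega : c ≤ n) n hn (le_refl n)
      rw [show (c + 1) * n = c * n + n by ring]
      push_cast
      linarith

lemma ham_le (hL : 2 * (n + 2) ≤ L) (a : Site L) {h : ℝ} (hn : 1 ≤ n)
    (h0 : 0 < h) (h2 : h < 2) (hh : h * (n : ℝ) < 2) :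
    ∀ i ≤ n * (n + 1) + 1,
      BC.ham L h (cfg L a n i)
        ≤ h * (L : ℝ) ^ 2 + (4 * (n : ℝ) + 4 - h * ((n : ℝ) ^ 2 + (n : ℝ) + 1)) := by
  intro i hi
  have hnR : (1 : ℝ) ≤ (n : ℝ) := by exact_mod_cast hn
  have hnn0 : (0 : ℝ) ≤ (n : ℝ) := by linarith
  have hsq : h * (n : ℝ) ^ 2 ≤ 2 * (n : ℝ) := by nlinarith
  rcases Nat.eq_zero_or_pos i with h0i | h1i
  · rw [h0i, cfg_zero', ham_cminus]
    nlinarith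
  rcases le_or_gt i n with hin | hin
  · have hcol := bound_col0 hL a h hn i h1i hin
    have hcast : (i : ℝ) ≤ (n : ℝ) := by exact_mod_cast hin
    have h1c : (1 : ℝ) ≤ (i : ℝ) := by exact_mod_cast h1i
    nlinarith
  rcases le_or_gt i (n * (n + 1)) with hi2 | hi3
  · set c := (i - 1) / n with hcdef
    set r := (i - 1) % n with hrdef
    have hdm : n * c + r = i - 1 := Nat.div_add_mod (i - 1) n
    have hrlt : r < n := Nat.mod_lt _ (by omega)
    have hc1 : 1 ≤ c := by
      rw [hcdef, Nat.le_div_iff_mul_le (by omega : 0 < n)]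
      omega
    have hcn : c ≤ n := by
      have hmc : (n + 1) * n = n * (n + 1) := Nat.mul_comm _ _
      have hlt : (i - 1) / n < n + 1 := (Nat.div_lt_iff_lt_mul (by omega : 0 < n)).mpr (by omega)
      rw [hcdef]
      omega
    have hieq : i = c * n + (r + 1) := by
      calc i = (i - 1) + 1 := (Nat.succ_pred_eq_of_pos h1i).symm
      _ = (n * c + r) + 1 := by rw [hdm]
      _ = c * n + (r + 1) := by ring
    have hmain := bound_inner hL a h hn hc1 hcn (r + 1) (by omega) (by omega)
    have hfull := bound_full hL a h hn c hc1 (by omega)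
    rw [← hieq] at hmain
    have hc1R : (1 : ℝ) ≤ (c : ℝ) := by exact_mod_cast hc1
    have hcnR : (c : ℝ) ≤ (n : ℝ) := by exact_mod_cast hcn
    have hrR : (0 : ℝ) ≤ (r : ℝ) := by positivity
    have key1 : (0 : ℝ) ≤ ((n : ℝ) + 1 - (c : ℝ)) * (2 - h * (n : ℝ)) :=
      mul_nonneg (by linarith) (by linarith)
    have key2 : (0 : ℝ) ≤ h * (r : ℝ) := mul_nonneg h0.le hrR
    push_cast at hmain
    nlinarith
  · have hieq : i = n * (n + 1) + 1 := by omega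
    have hfull := bound_full hL a h hn (n + 1) (by omega) (le_refl _)
    rw [show (n + 1) * n = n * (n + 1) by ring] at hfull
    have hstep := stepB hL a h hn (le_refl (n * (n + 1))) (prot_present hL a hn)
    rw [hieq]
    push_cast at hfull ⊢
    nlinarith

end Energy

section Sets

variable {L n : ℕ} [NeZero L]

lemma asites_cfg (a : Site L) (i : ℕ) :
    BC.Asites L (cfg L a n i) = (shp n i).image (emb L a) := by
  unfold BC.Asites cfg
  ext x
  simp only [Finset.mem_filter, Finset.mem_univ, true_and]
  split_ifs with hx
  · simp only [hx, iff_true]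
    decide
  · simp only [hx, iff_false]
    simp

lemma card_shp (hn : 1 ≤ n) {i : ℕ} (hi : i ≤ n * (n + 1) + 1) : (shp n i).card = i := by
  unfold shp
  rw [Finset.card_image_of_injOn, Finset.card_range]
  intro k hk l hl he
  simp only [Finset.coe_range, Set.mem_Iio] at hk hl
  exact pt_inj hn (by omega) (by omega) he

lemma card_image_emb (hL : 2 * (n + 2) ≤ L) (a : Site L) (hn : 1 ≤ n) {i : ℕ}
    (hi : i ≤ n * (n + 1) + 1) : ((shp n i).image (emb L a)).card = i := by
  rw [Finset.card_image_of_injOn, card_shp hn hi]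
  intro p hp q hq he
  simp only [Finset.mem_coe] at hp hq
  have hb1 := mem_shp_bound hn hi hp
  have hb2 := mem_shp_bound hn hi hq
  exact emb_inj hL a hb1.1 hb1.2 hb2.1 hb2.2 he

lemma nsz_cfg (hL : 2 * (n + 2) ≤ L) (a : Site L) (hn : 1 ≤ n) {i : ℕ}
    (hi : i ≤ n * (n + 1) + 1) : BC.Nsz L (cfg L a n i) = i := by
  unfold BC.Nsz
  rw [asites_cfg, card_image_emb hL a hn hi]

lemma shp_succ (n i : ℕ) : shp n (i + 1) = insert (pt n i) (shp n i) := by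
  unfold shp
  rw [Finset.range_add_one, Finset.image_insert]

lemma shp_mono {n i j : ℕ} (hij : i ≤ j) : shp n i ⊆ shp n j :=
  Finset.image_subset_image (Finset.range_subset_range.mpr hij)

lemma pt0 (hn : 1 ≤ n) : pt n 0 = (0, 0) := by
  unfold pt
  rw [if_pos (by positivity)]
  simp

lemma emb00 (a : Site L) : emb L a (0, 0) = a := by
  unfold emb
  simp

lemma shp_full (hn : 1 ≤ n) : shp n (n * (n + 1)) = Finset.range (n + 1) ×ˢ Finset.range n := by
  ext p
  simp only [shp, Finset.mem_image, Finset.mem_range, Finset.mem_product]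
  constructor
  · rintro ⟨k, hk, rfl⟩
    have hmc : (n + 1) * n = n * (n + 1) := Nat.mul_comm _ _
    have hb : k / n < n + 1 := (Nat.div_lt_iff_lt_mul (by omega : 0 < n)).mpr (by omega)
    unfold pt
    rw [if_pos hk]
    exact ⟨hb, Nat.mod_lt _ (by omega)⟩
  · rintro ⟨h1, h2⟩
    refine ⟨p.1 * n + p.2, by nlinarith, ?_⟩
    rw [pt_eval hn (by omega) h2]

lemma rect_eq (a : Site L) :
    BC.rect L a (n + 1) n = (Finset.range (n + 1) ×ˢ Finset.range n).image (emb L a) := rfl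

lemma cfg_mem_setRa (hL : 2 * (n + 2) ≤ L) (a : Site L) (hn : 1 ≤ n) :
    cfg L a n (n * (n + 1) + 1) ∈ BC.setRa L n := by
  have hptK : pt n (n * (n + 1)) = (0, n) := by unfold pt; rw [if_neg (by omega)]
  have hzS : emb L a (0, n) ∉ BC.rect L a (n + 1) n := by
    rw [rect_eq]
    simp only [Finset.mem_image, Finset.mem_product, Finset.mem_range]
    rintro ⟨p, ⟨hp1, hp2⟩, he⟩
    have := emb_inj hL a (by omega) (by omega) (by omega) (le_refl n) he
    rw [this] at hp2
    omega
  refine ⟨BC.rect L a (n + 1) n, emb L a (0, n), ⟨a, Or.inr rfl⟩, hzS, ?_, ?_, ?_, ?_⟩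
  · rw [asites_cfg, shp_succ, hptK, Finset.image_insert, rect_eq, shp_full hn]
  · intro x hx
    rw [rect_eq] at hx
    simp only [Finset.mem_image] at hx
    obtain ⟨p, hp, rfl⟩ := hx
    refine cfg_mem_one a ?_
    refine shp_mono (Nat.le_succ _) ?_
    rw [shp_full hn]
    exact hp
  · have : (0, n) = pt n (n * (n + 1)) := hptK.symm
    rw [this]
    exact cfg_mem_one a (pt_mem_shp hn (by omega))
  · refine ⟨emb L a (0, n - 1), ?_, ?_⟩
    · rw [rect_eq]
      refine Finset.mem_image_of_mem _ ?_
      simp only [Finset.mem_product, Finset.mem_range]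
      omega
    · right; right; right
      rw [← emb_sub01 a 0 n hn]

lemma cfg_mem_setRplus (hL : 2 * (n + 2) ≤ L) (a : Site L) (hn : 1 ≤ n) :
    cfg L a n (n * (n + 1) + 1) ∈ BC.setRplus L n := by
  obtain ⟨S, z, h1, h2, h3, h4, _⟩ := cfg_mem_setRa hL a hn
  exact ⟨S, z, h1, h2, h3, h4⟩

lemma cfg_mem_valley (hL : 2 * (n + 2) ≤ L) (a : Site L) (hn : 1 ≤ n) {i : ℕ}
    (hi : i ≤ n * (n + 1) + 1) : cfg L a n i ∈ BC.valleyM L n := by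
  rcases le_or_gt i (n * (n + 1)) with hle | hgt
  · exact Or.inl (by rw [Set.mem_setOf_eq, nsz_cfg hL a hn (by omega)]; exact hle)
  · have : i = n * (n + 1) + 1 := by omega
    rw [this]
    exact Or.inr (cfg_mem_setRplus hL a hn)

lemma onediff_cfg (hL : 2 * (n + 2) ≤ L) (a : Site L) (hn : 1 ≤ n) {i : ℕ}
    (hi : i ≤ n * (n + 1)) : BC.oneDiff L (cfg L a n i) (cfg L a n (i + 1)) := by
  unfold BC.oneDiff
  have hupd := cfg_succ (L := L) (n := n) a i
  have hnew := cfg_new_zero hL a hn hi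
  have : (Finset.univ.filter fun x => cfg L a n i x ≠ cfg L a n (i + 1) x)
      = {emb L a (pt n i)} := by
    ext x
    simp only [Finset.mem_filter, Finset.mem_univ, true_and, Finset.mem_singleton, hupd]
    by_cases hx : x = emb L a (pt n i)
    · subst hx
      simp only [Function.update_self, hnew, iff_true]
      decide
    · simp only [Function.update_of_ne hx, hx, iff_false]
      simp
  rw [this, Finset.card_singleton]

lemma cfg_inj (hL : 2 * (n + 2) ≤ L) (hn : 1 ≤ n) {i i' : ℕ} {a a' : Site L}
    (hi : i ≤ n * (n + 1) + 1) (hi' : i' ≤ n * (n + 1) + 1) (h1 : 1 ≤ i)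
    (he : cfg L a n i = cfg L a' n i') : a = a' ∧ i = i' := by
  have hA : (shp n i).image (emb L a) = (shp n i').image (emb L a') := by
    rw [← asites_cfg a i, ← asites_cfg a' i', he]
  have hcard : i = i' := by
    have hc1 := card_image_emb hL a hn hi
    have hc2 := card_image_emb hL a' hn hi'
    rw [hA] at hc1
    omega
  subst hcard
  have h00 : pt n 0 ∈ shp n i := pt_mem_shp hn (by omega)
  rw [pt0 hn] at h00
  have ha : a ∈ (shp n i).image (emb L a') := by
    rw [← hA]
    have h5 : emb L a (0, 0) ∈ (shp n i).image (emb L a) := Finset.mem_image_of_mem _ h00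
    rwa [emb00] at h5
  have ha' : a' ∈ (shp n i).image (emb L a) := by
    rw [hA]
    have h5 : emb L a' (0, 0) ∈ (shp n i).image (emb L a') := Finset.mem_image_of_mem _ h00
    rwa [emb00] at h5
  simp only [Finset.mem_image] at ha ha'
  obtain ⟨q, hq, haq⟩ := ha
  obtain ⟨p, hp, hap⟩ := ha'
  have hbq := mem_shp_bound hn hi hq
  have hbp := mem_shp_bound hn hi hp
  have e1 : a.1 = a'.1 + (q.1 : ZMod L) := by rw [← haq]; rfl
  have e2 : a.2 = a'.2 + (q.2 : ZMod L) := by rw [← haq]; rfl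
  have e3 : a'.1 = a.1 + (p.1 : ZMod L) := by rw [← hap]; rfl
  have e4 : a'.2 = a.2 + (p.2 : ZMod L) := by rw [← hap]; rfl
  have k1 : p.1 + q.1 = 0 := by
    have h5 : a.1 = a.1 + ((p.1 : ZMod L) + (q.1 : ZMod L)) := by
      calc a.1 = a'.1 + (q.1 : ZMod L) := e1
      _ = a.1 + (p.1 : ZMod L) + (q.1 : ZMod L) := by rw [e3]
      _ = a.1 + ((p.1 : ZMod L) + (q.1 : ZMod L)) := by ring
    have h6 : ((p.1 + q.1 : ℕ) : ZMod L) = 0 := by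
      push_cast
      exact (left_eq_add.mp h5).symm ▸ rfl
    have hv := congrArg ZMod.val h6
    rwa [ZMod.val_cast_of_lt (by omega), ZMod.val_zero] at hv
  have k2 : p.2 + q.2 = 0 := by
    have h5 : a.2 = a.2 + ((p.2 : ZMod L) + (q.2 : ZMod L)) := by
      calc a.2 = a'.2 + (q.2 : ZMod L) := e2
      _ = a.2 + (p.2 : ZMod L) + (q.2 : ZMod L) := by rw [e4]
      _ = a.2 + ((p.2 : ZMod L) + (q.2 : ZMod L)) := by ring
    have h6 : ((p.2 + q.2 : ℕ) : ZMod L) = 0 := by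
      push_cast
      exact (left_eq_add.mp h5).symm ▸ rfl
    have hv := congrArg ZMod.val h6
    rwa [ZMod.val_cast_of_lt (by omega), ZMod.val_zero] at hv
  have hq0 : q = ((0 : ℕ), (0 : ℕ)) := Prod.ext (by omega) (by omega)
  rw [hq0, emb00] at haq
  exact ⟨haq.symm, rfl⟩

end Sets

end Aux

set_option maxHeartbeats 1000000 in
/-- Lemma (ml4) : lower bound on the Dirichlet form of any admissible function for the
capacity `Cap_V(Rᵃ, {-1})` of the chain reflected in the valley of `-1`. -/
theorem stmt_6 (h : ℝ) (h0 : 0 < h) (h2 : h < 2)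
    (hirr : ∀ m : ℤ, (2 : ℝ) / h ≠ (m : ℝ)) :
    ∃ C0 : ℝ, 0 < C0 ∧ ∀ β : ℝ, C0 ≤ β → ∀ (L : ℕ) [NeZero L],
      2 * (BC.n0 h + 2) ≤ L →
      ∀ f : BC.Cfg L → ℝ, (∀ σ, 0 ≤ f σ ∧ f σ ≤ 1) →
        (∀ σ ∈ BC.setRa L (BC.n0 h), f σ = 1) → f (BC.cminus L) = 0 →
        (L : ℝ) ^ 2 * Real.exp (-β * BC.GammaC L h) / C0
          ≤ BC.dirV L h β (BC.valleyM L (BC.n0 h)) f := by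
  classical
  have hn1 : 1 ≤ BC.n0 h := by
    rw [BC.n0, Nat.le_floor_iff (by positivity)]
    rw [Nat.cast_one, le_div_iff₀ h0]
    linarith
  set n := BC.n0 h with hndef
  have hhn : h * (n : ℝ) < 2 := by
    have hle : (n : ℝ) ≤ 2 / h := Nat.floor_le (by positivity)
    have hne : (n : ℝ) ≠ 2 / h := by
      intro hc
      exact hirr (n : ℤ) (by exact_mod_cast hc.symm)
    have hlt : (n : ℝ) < 2 / h := lt_of_le_of_ne hle hne
    have := (lt_div_iff₀ h0).mp hlt
    linarith
  set K : ℕ := n * (n + 1) + 1 with hKdef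
  have hK0 : 0 < (K : ℝ) := by positivity
  refine ⟨2 * (K : ℝ), by positivity, ?_⟩
  intro β hβ L _ hLn f hf hfRa hfm
  have hβ0 : 0 ≤ β := le_trans (by positivity) hβ
  have hGam : BC.GammaC L h
      = h * (L : ℝ) ^ 2 + (4 * (n : ℝ) + 4 - h * ((n : ℝ) ^ 2 + (n : ℝ) + 1)) := by
    unfold BC.GammaC
    push_cast
    ring
  have hham : ∀ (a : BC.Site L) (i : ℕ), i ≤ K →
      BC.ham L h (Aux.cfg L a n i) ≤ BC.GammaC L h := by
    intro a i hi
    rw [hGam]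
    exact Aux.ham_le hLn a hn1 h0 h2 hhn i hi
  have hgw : ∀ (a : BC.Site L) (i : ℕ), i ≤ K →
      Real.exp (-β * BC.GammaC L h) ≤ BC.gw L h β (Aux.cfg L a n i) := by
    intro a i hi
    unfold BC.gw
    apply Real.exp_le_exp.mpr
    have h1 := hham a i hi
    nlinarith [mul_le_mul_of_nonneg_left h1 hβ0]
  set V := BC.valleyM L n with hV
  set G : BC.Cfg L → BC.Cfg L → ℝ := fun σ τ =>
    if σ ∈ V ∧ τ ∈ V ∧ BC.oneDiff L σ τ
    then min (BC.gw L h β σ) (BC.gw L h β τ) * (f τ - f σ) ^ 2 else 0 with hG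
  have hGnn : ∀ σ τ, 0 ≤ G σ τ := by
    intro σ τ
    rw [hG]
    dsimp only
    split_ifs with hc
    · apply mul_nonneg
      · exact le_min (by unfold BC.gw; positivity) (by unfold BC.gw; positivity)
      · positivity
    · exact le_refl 0
  set e : BC.Site L × ℕ → BC.Cfg L × BC.Cfg L :=
    fun q => (Aux.cfg L q.1 n q.2, Aux.cfg L q.1 n (q.2 + 1)) with he
  set I : Finset (BC.Site L × ℕ) := Finset.univ ×ˢ Finset.range K with hI
  have hinj : ∀ q ∈ I, ∀ q' ∈ I, e q = e q' → q = q' := by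
    intro q hq q' hq' heq
    simp only [hI, Finset.mem_product, Finset.mem_range, Finset.mem_univ, true_and] at hq hq'
    have h2nd : Aux.cfg L q.1 n (q.2 + 1) = Aux.cfg L q'.1 n (q'.2 + 1) := by
      have := congrArg Prod.snd heq
      simpa [he] using this
    have hres := Aux.cfg_inj hLn hn1 (by omega) (by omega) (by omega) h2nd
    exact Prod.ext hres.1 (by omega)
  have hdir : BC.dirV L h β V f
      = (1/2) * ∑ p ∈ Finset.univ ×ˢ Finset.univ, G p.1 p.2 := by
    unfold BC.dirV
    rw [Finset.sum_product]
  have hstep1 : ∑ p ∈ (I.image e), G p.1 p.2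
      ≤ ∑ p ∈ (Finset.univ ×ˢ Finset.univ : Finset (BC.Cfg L × BC.Cfg L)), G p.1 p.2 := by
    apply Finset.sum_le_sum_of_subset_of_nonneg
    · intro p _
      simp [Finset.mem_product]
    · intro p _ _
      exact hGnn _ _
  have hstep2 : ∑ p ∈ I.image e, G p.1 p.2 = ∑ q ∈ I, G (e q).1 (e q).2 :=
    Finset.sum_image hinj
  have hedge : ∀ q ∈ I,
      Real.exp (-β * BC.GammaC L h)
          * (f (Aux.cfg L q.1 n (q.2 + 1)) - f (Aux.cfg L q.1 n q.2)) ^ 2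
        ≤ G (e q).1 (e q).2 := by
    intro q hq
    simp only [hI, Finset.mem_product, Finset.mem_univ, true_and, Finset.mem_range] at hq
    have hcond : Aux.cfg L q.1 n q.2 ∈ V ∧ Aux.cfg L q.1 n (q.2 + 1) ∈ V ∧
        BC.oneDiff L (Aux.cfg L q.1 n q.2) (Aux.cfg L q.1 n (q.2 + 1)) :=
      ⟨Aux.cfg_mem_valley hLn _ hn1 (by omega), Aux.cfg_mem_valley hLn _ hn1 (by omega),
        Aux.onediff_cfg hLn _ hn1 (by omega)⟩
    have hGe : G (e q).1 (e q).2
        = min (BC.gw L h β (Aux.cfg L q.1 n q.2)) (BC.gw L h β (Aux.cfg L q.1 n (q.2 + 1)))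
            * (f (Aux.cfg L q.1 n (q.2 + 1)) - f (Aux.cfg L q.1 n q.2)) ^ 2 := by
      rw [hG, he]
      dsimp only
      rw [if_pos hcond]
    rw [hGe]
    apply mul_le_mul_of_nonneg_right
    · exact le_min (hgw _ _ (by omega)) (hgw _ _ (by omega))
    · positivity
  have hsumI : ∑ q ∈ I,
      Real.exp (-β * BC.GammaC L h)
        * (f (Aux.cfg L q.1 n (q.2 + 1)) - f (Aux.cfg L q.1 n q.2)) ^ 2
      = Real.exp (-β * BC.GammaC L h) * ∑ a : BC.Site L, ∑ i ∈ Finset.range K,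
          (f (Aux.cfg L a n (i + 1)) - f (Aux.cfg L a n i)) ^ 2 := by
    rw [hI, Finset.sum_product, Finset.mul_sum]
    congr 1
    funext a
    rw [Finset.mul_sum]
  have hper : ∀ a : BC.Site L, (1 : ℝ) / (K : ℝ)
      ≤ ∑ i ∈ Finset.range K, (f (Aux.cfg L a n (i + 1)) - f (Aux.cfg L a n i)) ^ 2 := by
    intro a
    have htel : ∑ i ∈ Finset.range K, (f (Aux.cfg L a n (i + 1)) - f (Aux.cfg L a n i))
        = f (Aux.cfg L a n K) - f (Aux.cfg L a n 0) :=
      Finset.sum_range_sub (fun i => f (Aux.cfg L a n i)) K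
    have hfK : f (Aux.cfg L a n K) = 1 := by
      refine hfRa _ ?_
      rw [hKdef]
      exact Aux.cfg_mem_setRa hLn a hn1
    have hf0 : f (Aux.cfg L a n 0) = 0 := by rw [Aux.cfg_zero']; exact hfm
    have hCS := Finset.sum_mul_sq_le_sq_mul_sq (Finset.range K) (fun _ => (1 : ℝ))
      (fun i => f (Aux.cfg L a n (i + 1)) - f (Aux.cfg L a n i))
    simp only [one_mul, one_pow, Finset.sum_const, Finset.card_range, nsmul_eq_mul, mul_one]
      at hCS
    rw [htel, hfK, hf0] at hCS
    norm_num at hCS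
    rw [div_le_iff₀ hK0]
    calc (1 : ℝ) ≤ (K : ℝ) * ∑ i ∈ Finset.range K,
          (f (Aux.cfg L a n (i + 1)) - f (Aux.cfg L a n i)) ^ 2 := hCS
    _ = (∑ i ∈ Finset.range K, (f (Aux.cfg L a n (i + 1)) - f (Aux.cfg L a n i)) ^ 2)
          * (K : ℝ) := by ring
  have hcard : ((Finset.univ : Finset (BC.Site L)).card : ℝ) = (L : ℝ) ^ 2 := by
    rw [Finset.card_univ, Fintype.card_prod, ZMod.card]
    push_cast
    ring
  have hsum_a : (L : ℝ) ^ 2 * ((1 : ℝ) / (K : ℝ))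
      ≤ ∑ a : BC.Site L, ∑ i ∈ Finset.range K,
          (f (Aux.cfg L a n (i + 1)) - f (Aux.cfg L a n i)) ^ 2 := by
    calc (L : ℝ) ^ 2 * ((1 : ℝ) / (K : ℝ))
        = ∑ _a : BC.Site L, (1 : ℝ) / (K : ℝ) := by
          rw [Finset.sum_const, nsmul_eq_mul, hcard]
    _ ≤ _ := Finset.sum_le_sum (fun a _ => hper a)
  have hexp0 : 0 ≤ Real.exp (-β * BC.GammaC L h) := Real.exp_nonneg _
  have hfinal : Real.exp (-β * BC.GammaC L h) * ((L : ℝ) ^ 2 * ((1 : ℝ) / (K : ℝ)))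
      ≤ BC.dirV L h β V f * 2 := by
    have c1 : Real.exp (-β * BC.GammaC L h) * ((L : ℝ) ^ 2 * ((1 : ℝ) / (K : ℝ)))
        ≤ Real.exp (-β * BC.GammaC L h) * ∑ a : BC.Site L, ∑ i ∈ Finset.range K,
            (f (Aux.cfg L a n (i + 1)) - f (Aux.cfg L a n i)) ^ 2 :=
      mul_le_mul_of_nonneg_left hsum_a hexp0
    have c2 := Finset.sum_le_sum hedge
    rw [hsumI] at c2
    have c3 := hstep2
    have c4 := hstep1
    rw [hdir]
    linarith
  rw [hV] at hfinal
  rw [div_le_iff₀ (by positivity : (0:ℝ) < 2 * (K : ℝ))]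
  calc (L : ℝ) ^ 2 * Real.exp (-β * BC.GammaC L h)
      = (Real.exp (-β * BC.GammaC L h) * ((L : ℝ) ^ 2 * ((1 : ℝ) / (K : ℝ)))) * (K : ℝ) := by
        field_simp
  _ ≤ (BC.dirV L h β (BC.valleyM L n) f * 2) * (K : ℝ) := by
        apply mul_le_mul_of_nonneg_right hfinal (by positivity)
  _ = BC.dirV L h β (BC.valleyM L n) f * (2 * (K : ℝ)) := by ring
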